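/- Consider the two-player game Ψ with action sets {a1,a2} for player 1 and {b1,b2} for player 2, and payoffs (u_1,u_2): (a1,b1)↦(2,2), (a1,b2)↦(2,1), (a2,b1)↦(2,3), (a2,b2)↦(0,0). Then: (i) the set of Nash equilibria of Ψ is exactly the set of profiles σ with σ_2(b1)=1; and (ii) the set of empirical equilibria of Ψ is exactly the set of profiles σ with σ_2(b1)=1 and σ_1(a1) ≥ 1/2. -/

import Mathlib

open Filter Topology

section GameDefs

variable {N : Type} [Fintype N] [DecidableEq N] {A : N → Type}
  [∀ i, Fintype (A i)] [∀ i, DecidableEq (A i)]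

/-- A mixed-strategy profile: each `σ i` is a probability distribution on `A i`. -/
def IsStrategy (σ : ∀ i, A i → ℝ) : Prop :=
  (∀ i a, 0 ≤ σ i a) ∧ ∀ i, ∑ a, σ i a = 1

/-- An interior profile places positive probability on every action. -/
def Interior (σ : ∀ i, A i → ℝ) : Prop :=
  ∀ i a, 0 < σ i a

/-- Expected utility of player `i` at profile `σ`. -/
noncomputable def expUtil (u : ∀ i : N, (∀ j, A j) → ℝ) (σ : ∀ i, A i → ℝ) (i : N) : ℝ :=
  ∑ a : ∀ j, A j, u i a * ∏ j, σ j (a j)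

/-- Expected utility of player `i` from playing action `ai` against `σ₋ᵢ`. -/
noncomputable def devUtil (u : ∀ i : N, (∀ j, A j) → ℝ) (σ : ∀ i, A i → ℝ)
    (i : N) (ai : A i) : ℝ :=
  expUtil u (Function.update σ i (fun b => if b = ai then (1 : ℝ) else 0)) i

/-- Nash equilibrium. -/
def IsNash (u : ∀ i : N, (∀ j, A j) → ℝ) (σ : ∀ i, A i → ℝ) : Prop :=
  IsStrategy σ ∧ ∀ (i : N) (μ : A i → ℝ), (∀ a, 0 ≤ μ a) → (∑ a, μ a = 1) →
    expUtil u (Function.update σ i μ) i ≤ expUtil u σ i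

/-- Weak payoff monotonicity: differences in behavior reveal differences in payoffs. -/
def WeaklyPayoffMonotone (u : ∀ i : N, (∀ j, A j) → ℝ) (σ : ∀ i, A i → ℝ) : Prop :=
  IsStrategy σ ∧ ∀ (i : N) (ai bi : A i), σ i bi < σ i ai →
    devUtil u σ i bi < devUtil u σ i ai

/-- Payoff monotonicity. -/
def PayoffMonotone (u : ∀ i : N, (∀ j, A j) → ℝ) (σ : ∀ i, A i → ℝ) : Prop :=
  IsStrategy σ ∧ ∀ (i : N) (ai bi : A i),
    σ i bi ≤ σ i ai ↔ devUtil u σ i bi ≤ devUtil u σ i ai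

/-- Pointwise convergence of a sequence of profiles. -/
def ConvergesTo (s : ℕ → ∀ i, A i → ℝ) (σ : ∀ i, A i → ℝ) : Prop :=
  ∀ (i : N) (ai : A i), Tendsto (fun n => s n i ai) atTop (𝓝 (σ i ai))

/-- Empirical equilibrium: a Nash equilibrium that is the limit of weakly payoff
monotone profiles. -/
def IsEmpirical (u : ∀ i : N, (∀ j, A j) → ℝ) (σ : ∀ i, A i → ℝ) : Prop :=
  IsNash u σ ∧ ∃ s : ℕ → ∀ i, A i → ℝ,
    (∀ n, WeaklyPayoffMonotone u (s n)) ∧ ConvergesTo s σ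

/-- Proper equilibrium (Myerson). -/
def IsProper (u : ∀ i : N, (∀ j, A j) → ℝ) (σ : ∀ i, A i → ℝ) : Prop :=
  IsStrategy σ ∧ ∃ s : ℕ → ∀ i, A i → ℝ,
    (∀ n, IsStrategy (s n) ∧ Interior (s n) ∧
      ∀ (i : N) (ai bi : A i),
        devUtil u (s n) i bi < devUtil u (s n) i ai →
          s n i bi ≤ (1 / (n + 1) : ℝ) * s n i ai) ∧
    ConvergesTo s σ

/-- Perfect equilibrium (Selten, in Myerson's formulation). -/
def IsPerfect (u : ∀ i : N, (∀ j, A j) → ℝ) (σ : ∀ i, A i → ℝ) : Prop :=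
  IsStrategy σ ∧ ∃ s : ℕ → ∀ i, A i → ℝ,
    (∀ n, IsStrategy (s n) ∧ Interior (s n) ∧
      ∀ (i : N) (ai : A i), (1 / (n + 1) : ℝ) < s n i ai →
        ∀ bi : A i, devUtil u (s n) i bi ≤ devUtil u (s n) i ai) ∧
    ConvergesTo s σ

/-- `bi` weakly dominates `ai` for player `i`. -/
def WeaklyDominates (u : ∀ i : N, (∀ j, A j) → ℝ) (i : N) (bi ai : A i) : Prop :=
  (∀ a : ∀ j, A j, u i (Function.update a i ai) ≤ u i (Function.update a i bi)) ∧
  ∃ a : ∀ j, A j, u i (Function.update a i ai) < u i (Function.update a i bi)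

/-- Undominated Nash equilibrium. -/
def IsUndominatedNash (u : ∀ i : N, (∀ j, A j) → ℝ) (σ : ∀ i, A i → ℝ) : Prop :=
  IsNash u σ ∧ ∀ (i : N) (ai : A i), 0 < σ i ai →
    ¬ ∃ bi : A i, WeaklyDominates u i bi ai

end GameDefs

/-- A regular quantal response function on a finite set of actions `B`:
interiority, continuity, responsiveness, and monotonicity. -/
def IsRegularQRF {B : Type} [Fintype B] [DecidableEq B]
    (p : (B → ℝ) → (B → ℝ)) : Prop :=
  (∀ x, (∀ a, 0 < p x a) ∧ ∑ a, p x a = 1) ∧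
  Continuous p ∧
  (∀ (x : B → ℝ) (η : ℝ) (a : B), 0 < η →
    p x a < p (Function.update x a (x a + η)) a) ∧
  ∀ (x : B → ℝ) (a b : B), x b < x a → p x b < p x a

section QREDefs

variable {N : Type} [Fintype N] [DecidableEq N] {A : N → Type}
  [∀ i, Fintype (A i)] [∀ i, DecidableEq (A i)]

/-- Quantal response equilibrium with respect to a profile of QRFs `p`. -/
def IsQRE (u : ∀ i : N, (∀ j, A j) → ℝ) (p : ∀ i, (A i → ℝ) → (A i → ℝ))
    (σ : ∀ i, A i → ℝ) : Prop :=
  ∀ i : N, σ i = p i (fun ai => devUtil u σ i ai)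

/-- A sequence of profiles of QRFs is utility maximizing in the limit. -/
def UtilityMaximizingInLimit (u : ∀ i : N, (∀ j, A j) → ℝ)
    (p : ℕ → ∀ i, (A i → ℝ) → (A i → ℝ)) : Prop :=
  ∀ (s : ℕ → ∀ i, A i → ℝ) (σ : ∀ i, A i → ℝ),
    (∀ n, IsQRE u (p n) (s n)) → ConvergesTo s σ → IsNash u σ

/-- `σ` is approachable by regular QRE that are utility maximizing in the limit. -/
def ApproachableByRegularQRE (u : ∀ i : N, (∀ j, A j) → ℝ) (σ : ∀ i, A i → ℝ) : Prop :=
  ∃ p : ℕ → ∀ i, (A i → ℝ) → (A i → ℝ),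
    (∀ n i, IsRegularQRF (p n i)) ∧ UtilityMaximizingInLimit u p ∧
    ∃ s : ℕ → ∀ i, A i → ℝ, (∀ n, IsQRE u (p n) (s n)) ∧ ConvergesTo s σ

end QREDefs

/-- A control cost function (van Damme), bundled with its derivative on `(0,1]`. -/
structure ControlCost where
  f : ℝ → ℝ
  f' : ℝ → ℝ
  hasDeriv : ∀ x ∈ Set.Ioc (0:ℝ) 1, HasDerivWithinAt f (f' x) (Set.Ioc (0:ℝ) 1) x
  contDeriv : ContinuousOn f' (Set.Ioc (0:ℝ) 1)
  anti : StrictAntiOn f (Set.Ioc (0:ℝ) 1)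
  convex : StrictConvexOn ℝ (Set.Ioc (0:ℝ) 1) f
  atOne : f 1 = 0
  blowup : Tendsto f (nhdsWithin 0 (Set.Ioi (0:ℝ))) atTop

/-- The game Ψ. Player `0` is player 1 (actions `0 = a1`, `1 = a2`); player `1` is
player 2 (actions `0 = b1`, `1 = b2`). Payoffs: (a1,b1)↦(2,2), (a1,b2)↦(2,1),
(a2,b1)↦(2,3), (a2,b2)↦(0,0). -/
noncomputable def uPsi : ∀ _ : Fin 2, (Fin 2 → Fin 2) → ℝ := fun i a =>
  if i = 0 then ![![(2:ℝ), 2], ![2, 0]] (a 0) (a 1)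
  else ![![(2:ℝ), 1], ![3, 0]] (a 0) (a 1)

lemma sum_pi_fin2 (f : (Fin 2 → Fin 2) → ℝ) :
    ∑ a, f a = f ![0,0] + f ![0,1] + f ![1,0] + f ![1,1] := by
  have key : ∀ x y : Fin 2, (Fin.cons x (Fin.cons y finZeroElim) : Fin 2 → Fin 2) = ![x,y] := by
    intro x y; funext j; fin_cases j <;> rfl
  rw [← (piFinTwoEquiv (fun _ => Fin 2)).symm.sum_comp]
  simp only [Fintype.sum_prod_type, Fin.sum_univ_two, piFinTwoEquiv, Equiv.coe_fn_symm_mk, key]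
  ring

lemma expUtil_eq (u : ∀ _ : Fin 2, (Fin 2 → Fin 2) → ℝ) (σ : ∀ _ : Fin 2, Fin 2 → ℝ) (i : Fin 2) :
    expUtil u σ i = u i ![0,0] * (σ 0 0 * σ 1 0) + u i ![0,1] * (σ 0 0 * σ 1 1)
      + u i ![1,0] * (σ 0 1 * σ 1 0) + u i ![1,1] * (σ 0 1 * σ 1 1) := by
  rw [expUtil, sum_pi_fin2]
  simp [Fin.prod_univ_two]

lemma expPsi0 (σ : ∀ _ : Fin 2, Fin 2 → ℝ) :
    expUtil uPsi σ 0 = 2*(σ 0 0 * σ 1 0) + 2*(σ 0 0 * σ 1 1) + 2*(σ 0 1 * σ 1 0) := by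
  rw [expUtil_eq]; norm_num [uPsi]

lemma expPsi1 (σ : ∀ _ : Fin 2, Fin 2 → ℝ) :
    expUtil uPsi σ 1 = 2*(σ 0 0 * σ 1 0) + (σ 0 0 * σ 1 1) + 3*(σ 0 1 * σ 1 0) := by
  rw [expUtil_eq]; norm_num [uPsi]

lemma devPsi00 (σ : ∀ _ : Fin 2, Fin 2 → ℝ) :
    devUtil uPsi σ 0 0 = 2 * σ 1 0 + 2 * σ 1 1 := by
  rw [devUtil, expPsi0]; norm_num [Function.update]

lemma devPsi01 (σ : ∀ _ : Fin 2, Fin 2 → ℝ) :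
    devUtil uPsi σ 0 1 = 2 * σ 1 0 := by
  rw [devUtil, expPsi0]; norm_num [Function.update]

lemma devPsi10 (σ : ∀ _ : Fin 2, Fin 2 → ℝ) :
    devUtil uPsi σ 1 0 = 2 * σ 0 0 + 3 * σ 0 1 := by
  rw [devUtil, expPsi1]; norm_num [Function.update]

lemma devPsi11 (σ : ∀ _ : Fin 2, Fin 2 → ℝ) :
    devUtil uPsi σ 1 1 = σ 0 0 := by
  rw [devUtil, expPsi1]; norm_num [Function.update]

lemma eps_tendsto : Filter.Tendsto (fun n : ℕ => (1:ℝ)/(n+2)) Filter.atTop (𝓝 0) := by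
  have h := (tendsto_one_div_add_atTop_nhds_zero_nat (𝕜 := ℝ)).comp (tendsto_add_atTop_nat 1)
  refine h.congr fun n => ?_
  simp [Function.comp]; ring


/-- in Ψ, the Nash equilibria are exactly the profiles in which player 2
plays b1 with certainty, and the empirical equilibria are exactly the Nash equilibria
in which player 1 plays a1 with probability at least 1/2. -/
theorem psi_nash_and_empirical (σ : ∀ _ : Fin 2, Fin 2 → ℝ) (hσ : IsStrategy σ) :
    (IsNash uPsi σ ↔ σ 1 0 = 1) ∧
    (IsEmpirical uPsi σ ↔ (σ 1 0 = 1 ∧ 1 / 2 ≤ σ 0 0)) := by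
  obtain ⟨hpos, hsum⟩ := hσ
  have h0sum : σ 0 0 + σ 0 1 = 1 := by have := hsum 0; rwa [Fin.sum_univ_two] at this
  have h1sum : σ 1 0 + σ 1 1 = 1 := by have := hsum 1; rwa [Fin.sum_univ_two] at this
  have hnash : IsNash uPsi σ ↔ σ 1 0 = 1 := by
    constructor
    · rintro ⟨-, h⟩
      have key := h 1 (fun b => if b = 0 then 1 else 0)
        (by intro a; by_cases ha : a = 0 <;> simp [ha]) (by rw [Fin.sum_univ_two]; norm_num)
      rw [expPsi1, expPsi1] at key
      simp [Function.update] at key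
      have hc : σ 1 0 = 1 - σ 1 1 := by linarith
      rw [hc] at key
      have hab : (1:ℝ) ≤ σ 0 0 + 3 * σ 0 1 := by linarith [hpos 0 1]
      have hm := mul_le_mul_of_nonneg_left hab (hpos 1 1)
      have hd : σ 1 1 ≤ 0 := by nlinarith [hm, key]
      rw [hc]
      have : σ 1 1 = 0 := le_antisymm hd (hpos 1 1)
      rw [this]; ring
    · intro h10
      have h11 : σ 1 1 = 0 := by linarith
      refine ⟨⟨hpos, hsum⟩, ?_⟩
      intro i μ hμpos hμsum
      rw [Fin.sum_univ_two] at hμsum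
      obtain hi | hi : i = 0 ∨ i = 1 := by omega
      · subst hi
        rw [expPsi0, expPsi0]
        simp [Function.update, h10, h11]
        linarith
      · subst hi
        rw [expPsi1, expPsi1]
        simp [Function.update, h10, h11]
        have e1 : σ 0 0 * (μ 0 + μ 1) = σ 0 0 := by rw [hμsum]; ring
        have e2 : σ 0 1 * (μ 0 + μ 1) = σ 0 1 := by rw [hμsum]; ring
        nlinarith [e1, e2, mul_nonneg (hμpos 1) (hpos 0 0), mul_nonneg (hμpos 1) (hpos 0 1)]
  refine ⟨hnash, ?_⟩
  constructor
  · rintro ⟨hN, s, hwpm, hconv⟩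
    refine ⟨hnash.mp hN, ?_⟩
    have key : ∀ n, 1/2 ≤ s n 0 0 := by
      intro n
      obtain ⟨⟨spos, ssum⟩, smono⟩ := hwpm n
      have hs0 : s n 0 0 + s n 0 1 = 1 := by have := ssum 0; rwa [Fin.sum_univ_two] at this
      by_contra hlt
      push_neg at hlt
      have h2 : s n 0 0 < s n 0 1 := by linarith
      have h3 := smono 0 1 0 h2
      rw [devPsi00, devPsi01] at h3
      linarith [spos 1 1]
    exact ge_of_tendsto (hconv 0 0) (Filter.Eventually.of_forall key)
  · rintro ⟨h10, h00⟩
    have h11 : σ 1 1 = 0 := by linarith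
    refine ⟨hnash.mpr h10, fun n => ![σ 0, ![1 - 1/(n+2:ℝ), 1/(n+2:ℝ)]], ?_, ?_⟩
    · intro n
      have he1 : (0:ℝ) < 1/(n+2:ℝ) := by positivity
      have he2 : (1:ℝ)/(n+2:ℝ) ≤ 1/2 := by
        rw [div_le_div_iff₀ (by positivity) (by norm_num)]
        have := Nat.cast_nonneg (α := ℝ) n
        linarith
      set τ : ∀ _ : Fin 2, Fin 2 → ℝ := ![σ 0, ![1 - 1/(n+2:ℝ), 1/(n+2:ℝ)]] with hτdef
      have hτ00 : τ 0 0 = σ 0 0 := rfl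
      have hτ01 : τ 0 1 = σ 0 1 := rfl
      have hτ10 : τ 1 0 = 1 - 1/(n+2:ℝ) := rfl
      have hτ11 : τ 1 1 = 1/(n+2:ℝ) := rfl
      refine ⟨⟨?_, ?_⟩, ?_⟩
      · intro i a
        obtain hi | hi : i = 0 ∨ i = 1 := by omega
        · subst hi
          obtain ha | ha : a = 0 ∨ a = 1 := by omega
          · subst ha; show (0:ℝ) ≤ τ 0 0; rw [hτ00]; exact hpos 0 0
          · subst ha; show (0:ℝ) ≤ τ 0 1; rw [hτ01]; exact hpos 0 1
        · subst hi
          obtain ha | ha : a = 0 ∨ a = 1 := by omega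
          · subst ha; show (0:ℝ) ≤ τ 1 0; rw [hτ10]; linarith
          · subst ha; show (0:ℝ) ≤ τ 1 1; rw [hτ11]; linarith
      · intro i
        obtain hi | hi : i = 0 ∨ i = 1 := by omega
        · subst hi; show ∑ a, τ 0 a = 1; rw [Fin.sum_univ_two, hτ00, hτ01]; exact h0sum
        · subst hi; show ∑ a, τ 1 a = 1; rw [Fin.sum_univ_two, hτ10, hτ11]; ring
      · intro i ai bi hlt
        obtain hi | hi : i = 0 ∨ i = 1 := by omega
        · subst hi
          obtain ha | ha : ai = 0 ∨ ai = 1 := by omega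
          · subst ha
            obtain hb | hb : bi = 0 ∨ bi = 1 := by omega
            · subst hb; exact absurd hlt (lt_irrefl _)
            · subst hb
              show devUtil uPsi τ 0 1 < devUtil uPsi τ 0 0
              rw [devPsi01, devPsi00, hτ10, hτ11]
              linarith
          · subst ha
            obtain hb | hb : bi = 0 ∨ bi = 1 := by omega
            · subst hb
              replace hlt : τ 0 0 < τ 0 1 := hlt
              rw [hτ00, hτ01] at hlt
              exfalso; linarith
            · subst hb; exact absurd hlt (lt_irrefl _)
        · subst hi
          obtain ha | ha : ai = 0 ∨ ai = 1 := by omega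
          · subst ha
            obtain hb | hb : bi = 0 ∨ bi = 1 := by omega
            · subst hb; exact absurd hlt (lt_irrefl _)
            · subst hb
              show devUtil uPsi τ 1 1 < devUtil uPsi τ 1 0
              rw [devPsi11, devPsi10, hτ00, hτ01]
              linarith [hpos 0 1]
          · subst ha
            obtain hb | hb : bi = 0 ∨ bi = 1 := by omega
            · subst hb
              replace hlt : τ 1 0 < τ 1 1 := hlt
              rw [hτ10, hτ11] at hlt
              exfalso; linarith
            · subst hb; exact absurd hlt (lt_irrefl _)
    · intro i ai
      obtain hi | hi : i = 0 ∨ i = 1 := by omega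
      · subst hi
        show Filter.Tendsto (fun n : ℕ =>
          (![σ 0, ![1 - 1/(n+2:ℝ), 1/(n+2:ℝ)]] : ∀ _ : Fin 2, Fin 2 → ℝ) 0 ai)
          Filter.atTop (𝓝 (σ 0 ai))
        have heq : ∀ n : ℕ,
            (![σ 0, ![1 - 1/(n+2:ℝ), 1/(n+2:ℝ)]] : ∀ _ : Fin 2, Fin 2 → ℝ) 0 ai = σ 0 ai :=
          fun n => rfl
        simp only [heq]
        exact tendsto_const_nhds
      · subst hi
        obtain ha | ha : ai = 0 ∨ ai = 1 := by omega
        · subst ha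
          show Filter.Tendsto (fun n : ℕ =>
            (![σ 0, ![1 - 1/(n+2:ℝ), 1/(n+2:ℝ)]] : ∀ _ : Fin 2, Fin 2 → ℝ) 1 0)
            Filter.atTop (𝓝 (σ 1 0))
          have heq : ∀ n : ℕ,
              (![σ 0, ![1 - 1/(n+2:ℝ), 1/(n+2:ℝ)]] : ∀ _ : Fin 2, Fin 2 → ℝ) 1 0
                = 1 - 1/(n+2:ℝ) := fun n => rfl
          simp only [heq, h10]
          simpa using tendsto_const_nhds.sub eps_tendsto
        · subst ha
          show Filter.Tendsto (fun n : ℕ =>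
            (![σ 0, ![1 - 1/(n+2:ℝ), 1/(n+2:ℝ)]] : ∀ _ : Fin 2, Fin 2 → ℝ) 1 1)
            Filter.atTop (𝓝 (σ 1 1))
          have heq : ∀ n : ℕ,
              (![σ 0, ![1 - 1/(n+2:ℝ), 1/(n+2:ℝ)]] : ∀ _ : Fin 2, Fin 2 → ℝ) 1 1
                = 1/(n+2:ℝ) := fun n => rfl
          simp only [heq, h11]
          exact eps_tendsto
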